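/- Fix N ≥ 1. On ℝ^N × ℝ^N × ℝ^N with coordinates (x,u,v), define the brackets B₁(F,G) = Σᵢ (∂F/∂xᵢ · ∂G/∂uᵢ − ∂G/∂xᵢ · ∂F/∂uᵢ) and B₂(F,G) = Σᵢ (∂F/∂xᵢ · ∂G/∂vᵢ − ∂G/∂xᵢ · ∂F/∂vᵢ) for smooth F,G, and the vector fields Y⁺ = Σ_k u_k ∂/∂v_k, Y⁻ = Σ_k v_k ∂/∂u_k, Y⁰ = Σ_k (u_k ∂/∂u_k − v_k ∂/∂v_k), acting on smooth functions as derivations. Then: (1) [Y⁺,Y⁻] = Y⁰, [Y⁰,Y⁺] = 2Y⁺, [Y⁰,Y⁻] = −2Y⁻ (sl(2) commutation relations); and (2) for all smooth F,G: Y⁺(B₁(F,G)) − B₁(Y⁺F,G) − B₁(F,Y⁺G) = −B₂(F,G), Y⁺(B₂(F,G)) − B₂(Y⁺F,G) − B₂(F,Y⁺G) = 0, Y⁻(B₂(F,G)) − B₂(Y⁻F,G) − B₂(F,Y⁻G) = −B₁(F,G), Y⁻(B₁(F,G)) − B₁(Y⁻F,G) − B₁(F,Y⁻G) = 0, Y⁰(B₁(F,G))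 − B₁(Y⁰F,G) − B₁(F,Y⁰G) = −B₁(F,G), and Y⁰(B₂(F,G)) − B₂(Y⁰F,G) − B₂(F,Y⁰G) = B₂(F,G). -/

import Mathlib

/-- The model space `ℝ^N × ℝ^N × ℝ^N` with coordinates `(x, u, v)`. -/
abbrev Tri (N : ℕ) := (Fin N → ℝ) × (Fin N → ℝ) × (Fin N → ℝ)

/-- Partial derivative `∂f/∂xᵢ`. -/
noncomputable def dX {N : ℕ} (i : Fin N) (f : Tri N → ℝ) (p : Tri N) : ℝ :=
  fderiv ℝ f p ((fun l => if l = i then 1 else 0), 0, 0)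

/-- Partial derivative `∂f/∂uᵢ`. -/
noncomputable def dU {N : ℕ} (i : Fin N) (f : Tri N → ℝ) (p : Tri N) : ℝ :=
  fderiv ℝ f p (0, (fun l => if l = i then 1 else 0), 0)

/-- Partial derivative `∂f/∂vᵢ`. -/
noncomputable def dV {N : ℕ} (i : Fin N) (f : Tri N → ℝ) (p : Tri N) : ℝ :=
  fderiv ℝ f p (0, 0, (fun l => if l = i then 1 else 0))

/-- The canonical bracket `B₁(F,G) = Σᵢ (∂F/∂xᵢ ∂G/∂uᵢ − ∂G/∂xᵢ ∂F/∂uᵢ)`. -/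
noncomputable def bracket1 {N : ℕ} (F G : Tri N → ℝ) (p : Tri N) : ℝ :=
  ∑ i, (dX i F p * dU i G p - dX i G p * dU i F p)

/-- The canonical bracket `B₂(F,G) = Σᵢ (∂F/∂xᵢ ∂G/∂vᵢ − ∂G/∂xᵢ ∂F/∂vᵢ)`. -/
noncomputable def bracket2 {N : ℕ} (F G : Tri N → ℝ) (p : Tri N) : ℝ :=
  ∑ i, (dX i F p * dV i G p - dX i G p * dV i F p)

/-- The vector field `Y⁺ = Σ_k u_k ∂/∂v_k` acting as a derivation. -/
noncomputable def Yplus {N : ℕ} (F : Tri N → ℝ) (p : Tri N) : ℝ :=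
  ∑ k, p.2.1 k * dV k F p

/-- The vector field `Y⁻ = Σ_k v_k ∂/∂u_k` acting as a derivation. -/
noncomputable def Yminus {N : ℕ} (F : Tri N → ℝ) (p : Tri N) : ℝ :=
  ∑ k, p.2.2 k * dU k F p

/-- The vector field `Y⁰ = Σ_k (u_k ∂/∂u_k − v_k ∂/∂v_k)` acting as a derivation. -/
noncomputable def Yzero {N : ℕ} (F : Tri N → ℝ) (p : Tri N) : ℝ :=
  ∑ k, (p.2.1 k * dU k F p - p.2.2 k * dV k F p)

namespace SL2Aux
variable {N : ℕ}

lemma one_ok : (1 : WithTop ℕ∞) ≤ ((⊤:ℕ∞) : WithTop ℕ∞) := by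
  have : ((1:ℕ∞) : WithTop ℕ∞) ≤ ((⊤:ℕ∞) : WithTop ℕ∞) := by
    exact_mod_cast (le_top : (1:ℕ∞) ≤ ⊤)
  simpa using this

lemma top_ok : ((⊤:ℕ∞) : WithTop ℕ∞) + 1 ≤ ((⊤:ℕ∞) : WithTop ℕ∞) := by
  exact_mod_cast (le_top : (⊤:ℕ∞) + 1 ≤ ⊤)

lemma two_ok : (2 : WithTop ℕ∞) ≤ ((⊤:ℕ∞) : WithTop ℕ∞) := by
  have : ((2:ℕ∞) : WithTop ℕ∞) ≤ ((⊤:ℕ∞) : WithTop ℕ∞) := by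
    exact_mod_cast (le_top : (2:ℕ∞) ≤ ⊤)
  simpa using this

open ContinuousLinearMap in
/-- `(x,u,v) ↦ (0,0,u)`. -/
noncomputable def Ap : Tri N →L[ℝ] Tri N :=
  (0 : Tri N →L[ℝ] (Fin N → ℝ)).prod
    ((0 : Tri N →L[ℝ] (Fin N → ℝ)).prod
      ((fst ℝ (Fin N → ℝ) (Fin N → ℝ)).comp (snd ℝ (Fin N → ℝ) ((Fin N → ℝ) × (Fin N → ℝ)))))

open ContinuousLinearMap in
/-- `(x,u,v) ↦ (0,v,0)`. -/
noncomputable def Am : Tri N →L[ℝ] Tri N :=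
  (0 : Tri N →L[ℝ] (Fin N → ℝ)).prod
    (((snd ℝ (Fin N → ℝ) (Fin N → ℝ)).comp (snd ℝ (Fin N → ℝ) ((Fin N → ℝ) × (Fin N → ℝ)))).prod 0)

open ContinuousLinearMap in
/-- `(x,u,v) ↦ (0,u,-v)`. -/
noncomputable def A0 : Tri N →L[ℝ] Tri N :=
  (0 : Tri N →L[ℝ] (Fin N → ℝ)).prod
    (((fst ℝ (Fin N → ℝ) (Fin N → ℝ)).comp (snd ℝ (Fin N → ℝ) ((Fin N → ℝ) × (Fin N → ℝ)))).prod
     (-((snd ℝ (Fin N → ℝ) (Fin N → ℝ)).comp (snd ℝ (Fin N → ℝ) ((Fin N → ℝ) × (Fin N → ℝ))))))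

lemma Ap_apply (p : Tri N) : Ap p = (0, 0, p.2.1) := rfl
lemma Am_apply (p : Tri N) : Am p = (0, p.2.2, 0) := rfl
lemma A0_apply (p : Tri N) : A0 p = (0, p.2.1, -p.2.2) := rfl

/-- `Yplus` is the directional derivative along `Ap`. -/
lemma Yplus_eq (f : Tri N → ℝ) (p : Tri N) : Yplus f p = fderiv ℝ f p (Ap p) := by
  unfold Yplus dV
  rw [Ap_apply]
  have h : ((0, 0, p.2.1) : Tri N)
      = ∑ k, p.2.1 k • (((0 : Fin N → ℝ), (0 : Fin N → ℝ), fun l => if l = k then (1:ℝ) else 0) : Tri N) := by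
    ext l <;>
      simp [Prod.fst_sum, Prod.snd_sum, Finset.sum_apply, mul_ite]
  rw [h, map_sum]
  refine Finset.sum_congr rfl fun k _ => ?_
  rw [map_smul]; simp

lemma Yminus_eq (f : Tri N → ℝ) (p : Tri N) : Yminus f p = fderiv ℝ f p (Am p) := by
  unfold Yminus dU
  rw [Am_apply]
  have h : ((0, p.2.2, 0) : Tri N)
      = ∑ k, p.2.2 k • (((0 : Fin N → ℝ), (fun l => if l = k then (1:ℝ) else 0), (0 : Fin N → ℝ)) : Tri N) := by
    ext l <;>
      simp [Prod.fst_sum, Prod.snd_sum, Finset.sum_apply, mul_ite]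
  rw [h, map_sum]
  refine Finset.sum_congr rfl fun k _ => ?_
  rw [map_smul]; simp

lemma Yzero_eq (f : Tri N → ℝ) (p : Tri N) : Yzero f p = fderiv ℝ f p (A0 p) := by
  unfold Yzero dU dV
  rw [A0_apply]
  have h : ((0, p.2.1, -p.2.2) : Tri N)
      = ∑ k, (p.2.1 k • (((0 : Fin N → ℝ), (fun l => if l = k then (1:ℝ) else 0), (0 : Fin N → ℝ)) : Tri N)
          - p.2.2 k • (((0 : Fin N → ℝ), (0 : Fin N → ℝ), fun l => if l = k then (1:ℝ) else 0) : Tri N)) := by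
    ext l <;>
      simp [Prod.fst_sum, Prod.snd_sum, Prod.fst_sub, Prod.snd_sub, Finset.sum_apply,
        Finset.sum_sub_distrib, mul_ite]
  rw [h, map_sum]
  refine Finset.sum_congr rfl fun k _ => ?_
  rw [map_sub, map_smul, map_smul]; simp

variable {F G : Tri N → ℝ}

lemma contDiff_fderiv (hF : ContDiff ℝ (⊤:ℕ∞) F) : ContDiff ℝ (⊤:ℕ∞) (fderiv ℝ F) :=
  hF.fderiv_right top_ok

lemma symm2 (hF : ContDiff ℝ (⊤:ℕ∞) F) (p w z : Tri N) :
    fderiv ℝ (fderiv ℝ F) p w z = fderiv ℝ (fderiv ℝ F) p z w :=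
  (hF.contDiffAt.isSymmSndFDerivAt (by rw [minSmoothness_of_isRCLikeNormedField]; exact two_ok)).eq w z

lemma fderiv_dirA (hF : ContDiff ℝ (⊤:ℕ∞) F) (A : Tri N →L[ℝ] Tri N) (p w : Tri N) :
    fderiv ℝ (fun q => fderiv ℝ F q (A q)) p w
      = fderiv ℝ (fderiv ℝ F) p w (A p) + fderiv ℝ F p (A w) := by
  have hd : DifferentiableAt ℝ (fderiv ℝ F) p :=
    ((contDiff_fderiv hF).differentiable (by simp)).differentiableAt
  rw [fderiv_clm_apply hd A.differentiableAt]
  simp [ContinuousLinearMap.flip_apply, add_comm]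

lemma fderiv_dir (hF : ContDiff ℝ (⊤:ℕ∞) F) (z p w : Tri N) :
    fderiv ℝ (fun q => fderiv ℝ F q z) p w = fderiv ℝ (fderiv ℝ F) p w z := by
  have hd : DifferentiableAt ℝ (fderiv ℝ F) p :=
    ((contDiff_fderiv hF).differentiable (by simp)).differentiableAt
  rw [fderiv_clm_apply hd (differentiableAt_const z)]
  simp [ContinuousLinearMap.flip_apply]

lemma contDiff_dir (hF : ContDiff ℝ (⊤:ℕ∞) F) (z : Tri N) :
    ContDiff ℝ (⊤:ℕ∞) (fun q => fderiv ℝ F q z) :=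
  (contDiff_fderiv hF).clm_apply contDiff_const

/-- commutator of two linear vector fields acting as derivations -/
lemma comm (A B : Tri N →L[ℝ] Tri N) (hF : ContDiff ℝ (⊤:ℕ∞) F) (p : Tri N) :
    fderiv ℝ (fun q => fderiv ℝ F q (B q)) p (A p)
      - fderiv ℝ (fun q => fderiv ℝ F q (A q)) p (B p)
      = fderiv ℝ F p (B (A p) - A (B p)) := by
  rw [fderiv_dirA hF B, fderiv_dirA hF A, symm2 hF p (B p) (A p), map_sub]
  ring

/-- derivative of a bracket-type sum in direction `w`. -/
lemma fderiv_bsum (hF : ContDiff ℝ (⊤:ℕ∞) F) (hG : ContDiff ℝ (⊤:ℕ∞) G)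
    (c d : Fin N → Tri N) (p w : Tri N) :
    fderiv ℝ (fun q => ∑ i, (fderiv ℝ F q (c i) * fderiv ℝ G q (d i)
        - fderiv ℝ G q (c i) * fderiv ℝ F q (d i))) p w
      = ∑ i, (fderiv ℝ (fderiv ℝ F) p w (c i) * fderiv ℝ G p (d i)
          + fderiv ℝ F p (c i) * fderiv ℝ (fderiv ℝ G) p w (d i)
          - (fderiv ℝ (fderiv ℝ G) p w (c i) * fderiv ℝ F p (d i)
          + fderiv ℝ G p (c i) * fderiv ℝ (fderiv ℝ F) p w (d i))) := by
  have dF : ∀ z p, DifferentiableAt ℝ (fun q => fderiv ℝ F q z) p := fun z p =>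
    ((contDiff_dir hF z).differentiable (by simp)).differentiableAt
  have dG : ∀ z p, DifferentiableAt ℝ (fun q => fderiv ℝ G q z) p := fun z p =>
    ((contDiff_dir hG z).differentiable (by simp)).differentiableAt
  rw [fderiv_fun_sum (fun i _ => (((dF (c i) p).fun_mul (dG (d i) p)).fun_sub
    ((dG (c i) p).fun_mul (dF (d i) p))))]
  rw [ContinuousLinearMap.sum_apply]
  refine Finset.sum_congr rfl fun i _ => ?_
  rw [fderiv_fun_sub ((dF (c i) p).fun_mul (dG (d i) p)) ((dG (c i) p).fun_mul (dF (d i) p)),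
      fderiv_fun_mul (dF (c i) p) (dG (d i) p), fderiv_fun_mul (dG (c i) p) (dF (d i) p)]
  simp only [ContinuousLinearMap.sub_apply, ContinuousLinearMap.add_apply,
    ContinuousLinearMap.smul_apply, smul_eq_mul, fderiv_dir hF _ p w, fderiv_dir hG _ p w]
  ring

/-- master Leibniz-defect identity for a linear vector field `A` acting on a
bracket-type sum. -/
lemma key (A : Tri N →L[ℝ] Tri N) (c d : Fin N → Tri N)
    (hF : ContDiff ℝ (⊤:ℕ∞) F) (hG : ContDiff ℝ (⊤:ℕ∞) G) (p : Tri N) :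
    fderiv ℝ (fun q => ∑ i, (fderiv ℝ F q (c i) * fderiv ℝ G q (d i)
        - fderiv ℝ G q (c i) * fderiv ℝ F q (d i))) p (A p)
      - (∑ i, (fderiv ℝ (fun q => fderiv ℝ F q (A q)) p (c i) * fderiv ℝ G p (d i)
          - fderiv ℝ G p (c i) * fderiv ℝ (fun q => fderiv ℝ F q (A q)) p (d i)))
      - (∑ i, (fderiv ℝ F p (c i) * fderiv ℝ (fun q => fderiv ℝ G q (A q)) p (d i)
          - fderiv ℝ (fun q => fderiv ℝ G q (A q)) p (c i) * fderiv ℝ F p (d i)))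
      = - ∑ i, (fderiv ℝ F p (A (c i)) * fderiv ℝ G p (d i)
          + fderiv ℝ F p (c i) * fderiv ℝ G p (A (d i))
          - fderiv ℝ G p (A (c i)) * fderiv ℝ F p (d i)
          - fderiv ℝ G p (c i) * fderiv ℝ F p (A (d i))) := by
  rw [fderiv_bsum hF hG c d p (A p)]
  simp only [fderiv_dirA hF A, fderiv_dirA hG A]
  rw [← Finset.sum_sub_distrib, ← Finset.sum_sub_distrib, ← Finset.sum_neg_distrib]
  refine Finset.sum_congr rfl fun i _ => ?_
  rw [symm2 hF p (c i) (A p), symm2 hF p (d i) (A p),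
      symm2 hG p (c i) (A p), symm2 hG p (d i) (A p)]
  ring

lemma triv_zero : (((0 : Fin N → ℝ), (0 : Fin N → ℝ), (0 : Fin N → ℝ)) : Tri N) = 0 := rfl

lemma neg_third (w : Fin N → ℝ) :
    (((0 : Fin N → ℝ), (0 : Fin N → ℝ), -w) : Tri N) = -((0, 0, w) : Tri N) := by
  ext l <;> simp

end SL2Aux

open SL2Aux in
/-- The vector fields `Y⁺ = u·∂_v`, `Y⁻ = v·∂_u`, `Y⁰ = u·∂_u − v·∂_v`
satisfy the `sl(2)` commutation relations `[Y⁺,Y⁻] = Y⁰`, `[Y⁰,Y⁺] = 2Y⁺`,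
`[Y⁰,Y⁻] = −2Y⁻`, and act on the canonical pair of brackets `B₁`, `B₂` by
`L_{Y⁺}B₁ = −B₂`, `L_{Y⁺}B₂ = 0`, `L_{Y⁻}B₂ = −B₁`, `L_{Y⁻}B₁ = 0`,
`L_{Y⁰}B₁ = −B₁`, `L_{Y⁰}B₂ = B₂`, which is the infinitesimal `Sp(2)`-covariance of
the canonical brackets. -/
theorem sl2_action_on_canonical_brackets (N : ℕ) (hN : 1 ≤ N) :
    ((∀ F : Tri N → ℝ, ContDiff ℝ (⊤ : ℕ∞) F → ∀ p : Tri N,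
        Yplus (fun q => Yminus F q) p - Yminus (fun q => Yplus F q) p = Yzero F p) ∧
     (∀ F : Tri N → ℝ, ContDiff ℝ (⊤ : ℕ∞) F → ∀ p : Tri N,
        Yzero (fun q => Yplus F q) p - Yplus (fun q => Yzero F q) p = 2 * Yplus F p) ∧
     (∀ F : Tri N → ℝ, ContDiff ℝ (⊤ : ℕ∞) F → ∀ p : Tri N,
        Yzero (fun q => Yminus F q) p - Yminus (fun q => Yzero F q) p
          = -(2 * Yminus F p))) ∧
    (∀ F G : Tri N → ℝ, ContDiff ℝ (⊤ : ℕ∞) F → ContDiff ℝ (⊤ : ℕ∞) G → ∀ p : Tri N,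
        (Yplus (fun q => bracket1 F G q) p
            - bracket1 (fun q => Yplus F q) G p
            - bracket1 F (fun q => Yplus G q) p = - bracket2 F G p) ∧
        (Yplus (fun q => bracket2 F G q) p
            - bracket2 (fun q => Yplus F q) G p
            - bracket2 F (fun q => Yplus G q) p = 0) ∧
        (Yminus (fun q => bracket2 F G q) p
            - bracket2 (fun q => Yminus F q) G p
            - bracket2 F (fun q => Yminus G q) p = - bracket1 F G p) ∧
        (Yminus (fun q => bracket1 F G q) p
            - bracket1 (fun q => Yminus F q) G p
            - bracket1 F (fun q => Yminus G q) p = 0) ∧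
        (Yzero (fun q => bracket1 F G q) p
            - bracket1 (fun q => Yzero F q) G p
            - bracket1 F (fun q => Yzero G q) p = - bracket1 F G p) ∧
        (Yzero (fun q => bracket2 F G q) p
            - bracket2 (fun q => Yzero F q) G p
            - bracket2 F (fun q => Yzero G q) p = bracket2 F G p)) := by
  constructor
  · refine ⟨?_, ?_, ?_⟩
    · intro F hF p
      simp only [Yplus_eq, Yminus_eq, Yzero_eq]
      rw [comm Ap Am hF p]
      congr 1
      ext l <;> simp [Ap_apply, Am_apply, A0_apply, Prod.fst_sub, Prod.snd_sub]
    · intro F hF p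
      simp only [Yplus_eq, Yzero_eq]
      rw [comm A0 Ap hF p]
      have h2 : Ap (A0 p) - A0 (Ap p) = (2:ℝ) • (Ap p : Tri N) := by
        ext l <;>
          simp [Ap_apply, A0_apply, Prod.fst_sub, Prod.snd_sub] <;> ring
      rw [h2, map_smul]; simp
    · intro F hF p
      simp only [Yminus_eq, Yzero_eq]
      rw [comm A0 Am hF p]
      have h2 : Am (A0 p) - A0 (Am p) = (-2:ℝ) • (Am p : Tri N) := by
        ext l <;>
          simp [Am_apply, A0_apply, Prod.fst_sub, Prod.snd_sub] <;> ring
      rw [h2, map_smul]; simp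
  · intro F G hF hG p
    refine ⟨?_, ?_, ?_, ?_, ?_, ?_⟩
    · have h := key (Ap (N := N))
        (fun i => (((fun l => if l = i then (1:ℝ) else 0) : Fin N → ℝ), 0, 0))
        (fun i => (0, ((fun l => if l = i then (1:ℝ) else 0) : Fin N → ℝ), 0)) hF hG p
      simp only [Yplus_eq, Yminus_eq, Yzero_eq, bracket1, bracket2, dX, dU, dV, Ap_apply, Am_apply, A0_apply, triv_zero, neg_third,
        map_zero, map_neg, zero_mul, mul_zero, neg_zero, zero_add, add_zero, sub_zero,
        zero_sub, mul_neg, neg_neg, sub_neg_eq_add, Finset.sum_const_zero] at h ⊢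
      rw [h]
    · have h := key (Ap (N := N))
        (fun i => (((fun l => if l = i then (1:ℝ) else 0) : Fin N → ℝ), 0, 0))
        (fun i => (0, 0, ((fun l => if l = i then (1:ℝ) else 0) : Fin N → ℝ))) hF hG p
      simp only [Yplus_eq, Yminus_eq, Yzero_eq, bracket1, bracket2, dX, dU, dV, Ap_apply, Am_apply, A0_apply, triv_zero, neg_third,
        map_zero, map_neg, zero_mul, mul_zero, neg_zero, zero_add, add_zero, sub_zero,
        zero_sub, mul_neg, neg_neg, sub_neg_eq_add, Finset.sum_const_zero] at h ⊢
      rw [h]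
    · have h := key (Am (N := N))
        (fun i => (((fun l => if l = i then (1:ℝ) else 0) : Fin N → ℝ), 0, 0))
        (fun i => (0, 0, ((fun l => if l = i then (1:ℝ) else 0) : Fin N → ℝ))) hF hG p
      simp only [Yplus_eq, Yminus_eq, Yzero_eq, bracket1, bracket2, dX, dU, dV, Ap_apply, Am_apply, A0_apply, triv_zero, neg_third,
        map_zero, map_neg, zero_mul, mul_zero, neg_zero, zero_add, add_zero, sub_zero,
        zero_sub, mul_neg, neg_neg, sub_neg_eq_add, Finset.sum_const_zero] at h ⊢
      rw [h]
    · have h := key (Am (N := N))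
        (fun i => (((fun l => if l = i then (1:ℝ) else 0) : Fin N → ℝ), 0, 0))
        (fun i => (0, ((fun l => if l = i then (1:ℝ) else 0) : Fin N → ℝ), 0)) hF hG p
      simp only [Yplus_eq, Yminus_eq, Yzero_eq, bracket1, bracket2, dX, dU, dV, Ap_apply, Am_apply, A0_apply, triv_zero, neg_third,
        map_zero, map_neg, zero_mul, mul_zero, neg_zero, zero_add, add_zero, sub_zero,
        zero_sub, mul_neg, neg_neg, sub_neg_eq_add, Finset.sum_const_zero] at h ⊢
      rw [h]
    · have h := key (A0 (N := N))
        (fun i => (((fun l => if l = i then (1:ℝ) else 0) : Fin N → ℝ), 0, 0))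
        (fun i => (0, ((fun l => if l = i then (1:ℝ) else 0) : Fin N → ℝ), 0)) hF hG p
      simp only [Yplus_eq, Yminus_eq, Yzero_eq, bracket1, bracket2, dX, dU, dV, Ap_apply, Am_apply, A0_apply, triv_zero, neg_third,
        map_zero, map_neg, zero_mul, mul_zero, neg_zero, zero_add, add_zero, sub_zero,
        zero_sub, mul_neg, neg_neg, sub_neg_eq_add, Finset.sum_const_zero] at h ⊢
      rw [h]
    · have h := key (A0 (N := N))
        (fun i => (((fun l => if l = i then (1:ℝ) else 0) : Fin N → ℝ), 0, 0))
        (fun i => (0, 0, ((fun l => if l = i then (1:ℝ) else 0) : Fin N → ℝ))) hF hG p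
      simp only [Yplus_eq, Yminus_eq, Yzero_eq, bracket1, bracket2, dX, dU, dV, Ap_apply, Am_apply, A0_apply, triv_zero, neg_third,
        map_zero, map_neg, zero_mul, mul_zero, neg_zero, zero_add, add_zero, sub_zero,
        zero_sub, mul_neg, neg_neg, sub_neg_eq_add, Finset.sum_const_zero] at h ⊢
      rw [h]
      rw [← Finset.sum_neg_distrib]
      exact Finset.sum_congr rfl fun i _ => by ring
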